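/- Let γ₁,…,γₙ be independent standard Gaussians and A = (a_{ij}) a symmetric real n×n matrix with zero diagonal. Then E(Σ_{1≤i<j≤n} γᵢγⱼ a_{ij})⁴ ≤ 15 · (E(Σ_{1≤i<j≤n} γᵢγⱼ a_{ij})²)², i.e. the L⁴ norm of the Gaussian chaos is at most 15^{1/4} times its L² norm. -/

import Mathlib

open MeasureTheory ProbabilityTheory Real MvPolynomial
open scoped ENNReal NNReal

/-! ### Gaussian moments -/

private lemma gchaos_intg (k : ℕ) : Integrable (fun x : ℝ => x ^ k * Real.exp (-x ^ 2 / 2)) := by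
  have h := integrable_rpow_mul_exp_neg_mul_sq (b := (1:ℝ)/2) (by norm_num) (s := (k:ℝ))
    (by exact_mod_cast neg_one_lt_zero.trans_le (Nat.cast_nonneg k))
  convert h using 2 with x
  rw [Real.rpow_natCast]
  congr 1
  ring

private lemma gchaos_intg' : Integrable (fun x : ℝ => Real.exp (-x ^ 2 / 2)) := by
  simpa using gchaos_intg 0

noncomputable def Igauss (k : ℕ) : ℝ := ∫ x : ℝ, x ^ k * Real.exp (-x ^ 2 / 2)

lemma Igauss_zero : Igauss 0 = Real.sqrt (2 * π) := by
  have h := integral_gaussian ((1:ℝ)/2)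
  unfold Igauss
  rw [show (2:ℝ) * π = π / (1/2) by ring, ← h]
  congr 1 with x
  rw [pow_zero, one_mul]
  congr 1
  ring

lemma Igauss_one : Igauss 1 = 0 := by
  have hderiv : ∀ x : ℝ, HasDerivAt (fun y : ℝ => -Real.exp (-y ^ 2 / 2))
      (x ^ 1 * Real.exp (-x ^ 2 / 2)) x := by
    intro x
    have h1 : HasDerivAt (fun y : ℝ => -y ^ 2 / 2) (-x) x := by
      have := ((hasDerivAt_pow 2 x).neg).div_const 2
      simpa using this.congr_deriv (by ring)
    have := (h1.exp).neg
    exact (show HasDerivAt (fun y : ℝ => -Real.exp (-y ^ 2 / 2)) _ x from this).congr_deriv (by ring)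
  have := integral_eq_zero_of_hasDerivAt_of_integrable hderiv (gchaos_intg 1) gchaos_intg'.neg
  simpa [Igauss] using this

lemma Igauss_rec (k : ℕ) : Igauss (k + 2) = (k + 1) * Igauss k := by
  have hderiv : ∀ x : ℝ, HasDerivAt (fun y : ℝ => y ^ (k+1) * Real.exp (-y ^ 2 / 2))
      ((k+1 : ℝ) * (x ^ k * Real.exp (-x ^ 2 / 2)) - x ^ (k+2) * Real.exp (-x ^ 2 / 2)) x := by
    intro x
    have h1 : HasDerivAt (fun y : ℝ => -y ^ 2 / 2) (-x) x := by
      have := ((hasDerivAt_pow 2 x).neg).div_const 2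
      simpa using this.congr_deriv (by ring)
    have h2 := (hasDerivAt_pow (k+1) x).mul h1.exp
    refine h2.congr_deriv ?_
    push_cast
    ring
  have hint : Integrable (fun x : ℝ =>
      (k+1 : ℝ) * (x ^ k * Real.exp (-x ^ 2 / 2)) - x ^ (k+2) * Real.exp (-x ^ 2 / 2)) :=
    ((gchaos_intg k).const_mul _).sub (gchaos_intg (k+2))
  have h0 := integral_eq_zero_of_hasDerivAt_of_integrable hderiv hint (gchaos_intg (k+1))
  have h1 := integral_sub ((gchaos_intg k).const_mul ((k:ℝ)+1)) (gchaos_intg (k+2))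
  rw [h1] at h0
  rw [integral_const_mul ((k:ℝ)+1) _] at h0
  have : Igauss (k+2) = ((k:ℝ)+1) * Igauss k := by
    unfold Igauss
    linarith
  simpa using this

noncomputable def gm (k : ℕ) : ℝ := ∫ x : ℝ, x ^ k ∂(gaussianReal 0 1)

lemma gm_eq (k : ℕ) : gm k = (Real.sqrt (2 * π))⁻¹ * Igauss k := by
  unfold gm Igauss
  rw [gaussianReal_of_var_ne_zero 0 one_ne_zero]
  have hd : gaussianPDF 0 1 = fun x => (((gaussianPDFReal 0 1 x).toNNReal : ℝ≥0) : ℝ≥0∞) := by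
    funext x; rfl
  rw [hd, integral_withDensity_eq_integral_smul ((measurable_gaussianPDFReal 0 1).real_toNNReal) _]
  simp only [NNReal.smul_def, smul_eq_mul]
  rw [← integral_const_mul]
  congr 1 with x
  rw [Real.coe_toNNReal _ (gaussianPDFReal_nonneg 0 1 x)]
  rw [gaussianPDFReal_def]
  norm_num
  ring

lemma sqrt_two_pi_pos : (0:ℝ) < Real.sqrt (2 * π) := Real.sqrt_pos.2 (by positivity)

lemma gm_zero : gm 0 = 1 := by
  rw [gm_eq, Igauss_zero, inv_mul_cancel₀ (ne_of_gt sqrt_two_pi_pos)]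

lemma gm_one : gm 1 = 0 := by rw [gm_eq, Igauss_one, mul_zero]

lemma gm_rec (k : ℕ) : gm (k + 2) = (k + 1) * gm k := by
  rw [gm_eq, gm_eq, Igauss_rec]; ring

lemma integrable_pow_gauss (k : ℕ) : Integrable (fun x : ℝ => x ^ k) (gaussianReal 0 1) := by
  rw [gaussianReal_of_var_ne_zero 0 one_ne_zero]
  rw [integrable_withDensity_iff (measurable_gaussianPDF 0 1)
    (ae_of_all _ fun x => ENNReal.ofReal_lt_top)]
  have : ∀ x : ℝ, x ^ k * (gaussianPDF 0 1 x).toReal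
      = (Real.sqrt (2*π))⁻¹ * (x ^ k * Real.exp (-x ^ 2 / 2)) := by
    intro x
    rw [gaussianPDF, ENNReal.toReal_ofReal (gaussianPDFReal_nonneg 0 1 x), gaussianPDFReal_def]
    norm_num; ring
  simp only [this]
  exact (gchaos_intg k).const_mul _

/-! ### Products of independent gaussians -/

section Probability

variable {Ω : Type*} [MeasureSpace Ω] [IsProbabilityMeasure (ℙ : Measure Ω)]
    {n : ℕ} (γ : Fin n → Ω → ℝ)

lemma integrable_pow_gamma (hmeas : ∀ i, Measurable (γ i))
    (hgauss : ∀ i, Measure.map (γ i) ℙ = gaussianReal 0 1)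
    (i : Fin n) (k : ℕ) : Integrable (fun ω => γ i ω ^ k) ℙ := by
  have h := integrable_pow_gauss k
  rw [← hgauss i] at h
  rw [integrable_map_measure (by fun_prop) ((hmeas i).aemeasurable)] at h
  exact h

lemma integral_pow_gamma (hmeas : ∀ i, Measurable (γ i))
    (hgauss : ∀ i, Measure.map (γ i) ℙ = gaussianReal 0 1)
    (i : Fin n) (k : ℕ) : ∫ ω, γ i ω ^ k = gm k := by
  rw [gm, ← hgauss i, integral_map ((hmeas i).aemeasurable) (by fun_prop)]

lemma gchaos_lemmaA (hmeas : ∀ i, Measurable (γ i))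
    (hindep : iIndepFun γ ℙ)
    (hgauss : ∀ i, Measure.map (γ i) ℙ = gaussianReal 0 1)
    (k : Fin n → ℕ) (s : Finset (Fin n)) :
    Integrable (fun ω => ∏ i ∈ s, γ i ω ^ k i) ℙ ∧
      (∫ ω, ∏ i ∈ s, γ i ω ^ k i) = ∏ i ∈ s, gm (k i) := by
  classical
  induction s using Finset.induction_on with
  | empty => simp
  | @insert i s hi ih =>
    have hF : ∀ j, Measurable (fun ω => γ j ω ^ k j) := fun j => (hmeas j).pow_const _
    have hfam : iIndepFun (fun j => fun ω => γ j ω ^ k j) ℙ :=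
      hindep.comp _ (fun j => measurable_id.pow_const (k j))
    have hIF : IndepFun (fun ω => ∏ j ∈ s, γ j ω ^ k j) (fun ω => γ i ω ^ k i) ℙ := by
      have := hfam.indepFun_finsetProd_of_notMem hF hi
      convert this using 1
      funext ω
      simp
    have h1 : Integrable (fun ω => γ i ω ^ k i) ℙ := integrable_pow_gamma γ hmeas hgauss i (k i)
    have hprod : Integrable (fun ω => (∏ j ∈ s, γ j ω ^ k j) * γ i ω ^ k i) ℙ :=
      hIF.integrable_mul ih.1 h1
    have hint : (∫ ω, (∏ j ∈ s, γ j ω ^ k j) * γ i ω ^ k i)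
        = (∫ ω, ∏ j ∈ s, γ j ω ^ k j) * ∫ ω, γ i ω ^ k i := by
      have := hIF.integral_mul_eq_mul_integral ih.1.aestronglyMeasurable h1.aestronglyMeasurable
      simpa [Pi.mul_apply] using this
    constructor
    · refine (hprod.congr ?_)
      filter_upwards with ω
      rw [Finset.prod_insert hi]
      ring
    · rw [Finset.prod_insert hi]
      have : (∫ ω, ∏ j ∈ insert i s, γ j ω ^ k j) = ∫ ω, (∏ j ∈ s, γ j ω ^ k j) * γ i ω ^ k i := by
        congr 1 with ω
        rw [Finset.prod_insert hi]; ring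
      rw [this, hint, ih.2, integral_pow_gamma γ hmeas hgauss i (k i)]
      ring

/-! ### Expectation of polynomials of gaussians -/

noncomputable def EE (P : MvPolynomial (Fin n) ℝ) : ℝ := ∫ ω, eval (fun i => γ i ω) P

variable (hmeas : ∀ i, Measurable (γ i))
    (hindep : iIndepFun γ ℙ)
    (hgauss : ∀ i, Measure.map (γ i) ℙ = gaussianReal 0 1)

include hmeas hindep hgauss

lemma EE_integrable (P : MvPolynomial (Fin n) ℝ) :
    Integrable (fun ω => eval (fun i => γ i ω) P) ℙ := by
  have h : (fun ω => eval (fun i => γ i ω) P)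
      = fun ω => ∑ d ∈ P.support, P.coeff d * ∏ i, γ i ω ^ d i := by
    funext ω; rw [eval_eq']
  rw [h]
  exact integrable_finset_sum _ fun d _ =>
    ((gchaos_lemmaA γ hmeas hindep hgauss d Finset.univ).1.const_mul _)

omit hmeas hindep hgauss in
lemma EE_monomial' (hmeas : ∀ i, Measurable (γ i))
    (hindep : iIndepFun γ ℙ)
    (hgauss : ∀ i, Measure.map (γ i) ℙ = gaussianReal 0 1)
    (v : Fin n →₀ ℕ) (c : ℝ) :
    EE γ (monomial v c) = c * ∏ i, gm (v i) := by
  unfold EE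
  have h : ∀ ω : Ω, eval (fun i => γ i ω) (monomial v c) = c * ∏ i, γ i ω ^ v i := by
    intro ω; rw [eval_monomial, Finsupp.prod_pow]
  simp only [h]
  rw [integral_const_mul, (gchaos_lemmaA γ hmeas hindep hgauss (fun i => v i) Finset.univ).2]

lemma EE_add (P Q : MvPolynomial (Fin n) ℝ) : EE γ (P + Q) = EE γ P + EE γ Q := by
  unfold EE
  simp only [map_add]
  exact integral_add (EE_integrable γ hmeas hindep hgauss P) (EE_integrable γ hmeas hindep hgauss Q)

omit hmeas hindep hgauss in
lemma EE_zero : EE γ (0 : MvPolynomial (Fin n) ℝ) = 0 := by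
  unfold EE; simp

omit hmeas hindep hgauss in
lemma EE_C_mul (a : ℝ) (P : MvPolynomial (Fin n) ℝ) : EE γ (C a * P) = a * EE γ P := by
  unfold EE
  simp only [map_mul, eval_C]
  exact integral_const_mul a _

omit hmeas hindep hgauss in
lemma EE_C (a : ℝ) : EE γ (C a : MvPolynomial (Fin n) ℝ) = a := by
  have : (C a : MvPolynomial (Fin n) ℝ) = C a * 1 := by ring
  rw [this, EE_C_mul]
  unfold EE
  simp

lemma EE_sum {α : Type*} (s : Finset α) (f : α → MvPolynomial (Fin n) ℝ) :
    EE γ (∑ x ∈ s, f x) = ∑ x ∈ s, EE γ (f x) := by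
  classical
  induction s using Finset.induction_on with
  | empty => simpa using EE_zero γ
  | @insert i s hi ih =>
    rw [Finset.sum_insert hi, Finset.sum_insert hi, EE_add γ hmeas hindep hgauss, ih]

/-- Gaussian integration by parts for polynomials. -/
lemma EE_IBP (i : Fin n) (P : MvPolynomial (Fin n) ℝ) :
    EE γ (X i * P) = EE γ (pderiv i P) := by
  classical
  induction P using MvPolynomial.induction_on' with
  | add p q hp hq =>
    rw [mul_add, EE_add γ hmeas hindep hgauss, map_add,
      EE_add γ hmeas hindep hgauss, hp, hq]
  | monomial u a =>
    have hXm : (X i : MvPolynomial (Fin n) ℝ) * monomial u a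
        = monomial (u + Finsupp.single i 1) a := by
      rw [X, monomial_mul]
      rw [one_mul, add_comm]
    rw [hXm, pderiv_monomial, EE_monomial' γ hmeas hindep hgauss,
      EE_monomial' γ hmeas hindep hgauss]
    rw [← Finset.mul_prod_erase Finset.univ _ (Finset.mem_univ i),
      ← Finset.mul_prod_erase Finset.univ _ (Finset.mem_univ i)]
    have herase : ∀ j ∈ Finset.univ.erase i,
        gm ((u + Finsupp.single i 1 : Fin n →₀ ℕ) j)
          = gm ((u - Finsupp.single i 1 : Fin n →₀ ℕ) j) := by
      intro j hj
      have hji : j ≠ i := (Finset.mem_erase.1 hj).1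
      rw [Finsupp.add_apply, Finsupp.tsub_apply, Finsupp.single_apply,
        if_neg (fun h => hji h.symm), add_zero, Nat.sub_zero]
    rw [Finset.prod_congr rfl herase]
    have hi1 : (u + Finsupp.single i 1 : Fin n →₀ ℕ) i = u i + 1 := by
      rw [Finsupp.add_apply, Finsupp.single_apply, if_pos rfl]
    have hi2 : (u - Finsupp.single i 1 : Fin n →₀ ℕ) i = u i - 1 := by
      rw [Finsupp.tsub_apply, Finsupp.single_apply, if_pos rfl]
    rw [hi1, hi2]
    have key : gm (u i + 1) = (u i : ℝ) * gm (u i - 1) := by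
      cases h : u i with
      | zero => simpa using gm_one
      | succ m =>
        have := gm_rec m
        simpa [Nat.add_sub_cancel] using this
    rw [key]
    push_cast
    ring

end Probability

/-! ### The chaos polynomial -/

section Poly
variable {n : ℕ} (A : Fin n → Fin n → ℝ)

noncomputable def Spoly : MvPolynomial (Fin n) ℝ :=
  ∑ i, ∑ j, if i < j then X i * X j * C (A i j) else 0

noncomputable def Rpoly (i : Fin n) : MvPolynomial (Fin n) ℝ := ∑ j, C (A i j) * X j

lemma ite_sum_poly {α : Type*} [AddCommMonoid α] {c : Prop} [Decidable c]
    {s : Finset (Fin n)} (f : Fin n → α) :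
    (∑ j ∈ s, if c then f j else 0) = if c then ∑ j ∈ s, f j else 0 := by
  split_ifs <;> simp

lemma pderiv_Rpoly (i k : Fin n) : pderiv k (Rpoly A i) = C (A i k) := by
  classical
  unfold Rpoly
  rw [map_sum]
  have h : ∀ j : Fin n, pderiv k (C (A i j) * X j) = if k = j then C (A i j) else 0 := by
    intro j
    rw [pderiv_C_mul]
    by_cases h : k = j
    · subst h; rw [pderiv_X_self, mul_one, if_pos rfl]
    · rw [pderiv_X_of_ne (fun hh => h hh.symm), mul_zero, if_neg h]
  simp only [h]
  rw [Finset.sum_ite_eq Finset.univ k (fun j => C (A i j)), if_pos (Finset.mem_univ k)]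

lemma pderiv_Spoly (hsymm : ∀ i j, A i j = A j i) (hdiag : ∀ i, A i i = 0) (k : Fin n) :
    pderiv k (Spoly A) = Rpoly A k := by
  classical
  unfold Spoly
  rw [map_sum]
  simp only [map_sum]
  have expand : ∀ i j : Fin n, pderiv k (if i < j then X i * X j * C (A i j) else 0)
      = (if k = i then (if i < j then X j * C (A i j) else 0) else 0)
        + (if k = j then (if i < j then X i * C (A i j) else 0) else 0) := by
    intro i j
    by_cases hij : i < j
    · rw [if_pos hij, if_pos hij, if_pos hij]
      rw [pderiv_mul, pderiv_mul, pderiv_C, mul_zero, add_zero]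
      by_cases hki : k = i
      · subst hki
        have hkj : k ≠ j := ne_of_lt hij
        simp [pderiv_X_self, pderiv_X_of_ne (fun hh => hkj hh.symm), hkj]
      · by_cases hkj : k = j
        · subst hkj
          simp [pderiv_X_self, pderiv_X_of_ne (fun hh => hki hh.symm), hki]
        · simp [pderiv_X_of_ne (fun hh => hki hh.symm), pderiv_X_of_ne (fun hh => hkj hh.symm),
            hki, hkj]
    · rw [if_neg hij, if_neg hij, if_neg hij, map_zero]
      simp
  simp only [expand]
  simp only [Finset.sum_add_distrib]
  simp only [ite_sum_poly]
  rw [Finset.sum_ite_eq Finset.univ k, if_pos (Finset.mem_univ k)]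
  have h2 : ∀ x : Fin n, (∑ x1 : Fin n, if k = x1
      then (if x < x1 then X x * C (A x x1) else 0) else 0)
      = (if x < k then X x * C (A x k) else 0) := by
    intro x
    rw [Finset.sum_ite_eq Finset.univ k, if_pos (Finset.mem_univ k)]
  simp only [h2]
  rw [Rpoly, ← Finset.sum_add_distrib]
  refine Finset.sum_congr rfl fun j _ => ?_
  rcases lt_trichotomy k j with h|h|h
  · rw [if_pos h, if_neg (not_lt.2 h.le), add_zero, mul_comm]
  · subst h
    simp [hdiag]
  · rw [if_neg (not_lt.2 h.le), if_pos h, zero_add, hsymm j k, mul_comm]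
end Poly


/-! ### A sum-splitting helper -/

lemma gchaos_sum2 {n : ℕ} (f : Fin n → Fin n → ℝ) :
    (∑ i, ∑ j, f i j)
      = (∑ i, ∑ j, if i < j then f i j + f j i else 0) + ∑ i, f i i := by
  classical
  have key : ∀ i j : Fin n, f i j
      = (if i < j then f i j else 0)
        + ((if j < i then f i j else 0) + (if i = j then f i j else 0)) := by
    intro i j
    rcases lt_trichotomy i j with h|h|h
    · rw [if_pos h, if_neg (not_lt.2 h.le), if_neg (ne_of_lt h)]; ring
    · subst h; simp
    · rw [if_neg (not_lt.2 h.le), if_pos h, if_neg (ne_of_gt h)]; ring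
  calc (∑ i, ∑ j, f i j)
      = ∑ i, ∑ j, ((if i < j then f i j else 0)
          + ((if j < i then f i j else 0) + (if i = j then f i j else 0))) :=
        Finset.sum_congr rfl fun i _ => Finset.sum_congr rfl fun j _ => key i j
    _ = (∑ i, ∑ j, if i < j then f i j else 0)
          + ((∑ i, ∑ j, if j < i then f i j else 0)
            + (∑ i, ∑ j, if i = j then f i j else 0)) := by
        simp only [Finset.sum_add_distrib]
    _ = (∑ i, ∑ j, if i < j then f i j else 0)
          + ((∑ i, ∑ j, if i < j then f j i else 0) + ∑ i, f i i) := by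
        congr 1
        congr 1
        · rw [Finset.sum_comm]
        · refine Finset.sum_congr rfl fun i _ => ?_
          rw [Finset.sum_ite_eq Finset.univ i (f i), if_pos (Finset.mem_univ i)]
    _ = (∑ i, ∑ j, if i < j then f i j + f j i else 0) + ∑ i, f i i := by
        rw [← add_assoc]
        congr 1
        rw [← Finset.sum_add_distrib]
        refine Finset.sum_congr rfl fun i _ => ?_
        rw [← Finset.sum_add_distrib]
        refine Finset.sum_congr rfl fun j _ => ?_
        split_ifs <;> ring

/-! ### The moment computation -/

section Comp
set_option linter.unusedSectionVars false

variable {Ω : Type*} [MeasureSpace Ω] [IsProbabilityMeasure (ℙ : Measure Ω)]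
    {n : ℕ} (γ : Fin n → Ω → ℝ)
    (hmeas : ∀ i, Measurable (γ i))
    (hindep : iIndepFun γ ℙ)
    (hgauss : ∀ i, Measure.map (γ i) ℙ = gaussianReal 0 1)
    (A : Fin n → Fin n → ℝ) (hsymm : ∀ i j, A i j = A j i) (hdiag : ∀ i, A i i = 0)

include hmeas hindep hgauss hsymm hdiag

-- E[X_j R_i] = A i j
lemma gstep3 (i j : Fin n) : EE γ (X j * Rpoly A i) = A i j := by
  rw [EE_IBP γ hmeas hindep hgauss, pderiv_Rpoly A, EE_C γ]

-- E[R_i R_j] = B i j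
lemma gstep4 (i j : Fin n) :
    EE γ (Rpoly A i * Rpoly A j) = ∑ k, A i k * A j k := by
  have h : Rpoly A i * Rpoly A j = ∑ k, C (A i k) * (X k * Rpoly A j) := by
    rw [Rpoly, Finset.sum_mul]
    exact Finset.sum_congr rfl fun k _ => by ring
  rw [h, EE_sum γ hmeas hindep hgauss]
  refine Finset.sum_congr rfl fun k _ => ?_
  rw [EE_C_mul γ, gstep3 γ hmeas hindep hgauss A hsymm hdiag]

lemma gstep5 (i j k l : Fin n) (hkl : l ≠ k) :
    EE γ (X k * (X l * (Rpoly A i * Rpoly A j)))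
      = A i k * A j l + A j k * A i l := by
  rw [EE_IBP γ hmeas hindep hgauss]
  rw [pderiv_mul, pderiv_X_of_ne hkl, pderiv_mul, pderiv_Rpoly A, pderiv_Rpoly A]
  have h : (0 : MvPolynomial (Fin n) ℝ) * (Rpoly A i * Rpoly A j)
        + X l * (C (A i k) * Rpoly A j + Rpoly A i * C (A j k))
      = C (A i k) * (X l * Rpoly A j) + C (A j k) * (X l * Rpoly A i) := by ring
  rw [h, EE_add γ hmeas hindep hgauss, EE_C_mul γ, EE_C_mul γ, gstep3 γ hmeas hindep hgauss A hsymm hdiag, gstep3 γ hmeas hindep hgauss A hsymm hdiag]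

-- E[S R_i R_j] = Tv i j
lemma gstep6 (i j : Fin n) :
    EE γ (Spoly A * (Rpoly A i * Rpoly A j))
      = ∑ k, ∑ l, if k < l then A k l * (A i k * A j l + A j k * A i l) else 0 := by
  have h : Spoly A * (Rpoly A i * Rpoly A j)
      = ∑ k, ∑ l, if k < l
          then (X k * X l * C (A k l)) * (Rpoly A i * Rpoly A j) else 0 := by
    rw [Spoly, Finset.sum_mul]
    refine Finset.sum_congr rfl fun k _ => ?_
    rw [Finset.sum_mul]
    refine Finset.sum_congr rfl fun l _ => ?_
    rw [ite_mul, zero_mul]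
  rw [h, EE_sum γ hmeas hindep hgauss]
  refine Finset.sum_congr rfl fun k _ => ?_
  rw [EE_sum γ hmeas hindep hgauss]
  refine Finset.sum_congr rfl fun l _ => ?_
  by_cases hkl : k < l
  · rw [if_pos hkl, if_pos hkl]
    have h2 : (X k * X l * C (A k l)) * (Rpoly A i * Rpoly A j)
        = C (A k l) * (X k * (X l * (Rpoly A i * Rpoly A j))) := by ring
    rw [h2, EE_C_mul γ, gstep5 γ hmeas hindep hgauss A hsymm hdiag i j k l (ne_of_gt hkl)]
  · rw [if_neg hkl, if_neg hkl, EE_zero γ]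

-- E[S²] = sig
lemma gstepsig :
    EE γ (Spoly A * Spoly A) = ∑ i, ∑ j, if i < j then A i j * A i j else 0 := by
  have h : Spoly A * Spoly A
      = ∑ i, ∑ j, if i < j then (X i * X j * C (A i j)) * Spoly A else 0 := by
    rw [Spoly, Finset.sum_mul]
    refine Finset.sum_congr rfl fun i _ => ?_
    rw [Finset.sum_mul]
    exact Finset.sum_congr rfl fun j _ => by rw [ite_mul, zero_mul]
  rw [h, EE_sum γ hmeas hindep hgauss]
  refine Finset.sum_congr rfl fun i _ => ?_
  rw [EE_sum γ hmeas hindep hgauss]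
  refine Finset.sum_congr rfl fun j _ => ?_
  by_cases hij : i < j
  · rw [if_pos hij, if_pos hij]
    have h2 : (X i * X j * C (A i j)) * Spoly A
        = C (A i j) * (X i * (X j * Spoly A)) := by ring
    rw [h2, EE_C_mul γ, EE_IBP γ hmeas hindep hgauss, pderiv_mul, pderiv_X_of_ne (ne_of_gt hij), pderiv_Spoly A hsymm hdiag,
      zero_mul, zero_add, gstep3 γ hmeas hindep hgauss A hsymm hdiag]
  · rw [if_neg hij, if_neg hij, EE_zero γ]

-- E[X_j S² R_i] = 2 Tv i j + A i j * sig
lemma gstepH (i j : Fin n) :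
    EE γ (X j * (Spoly A * (Spoly A * Rpoly A i)))
      = 2 * (∑ k, ∑ l, if k < l then A k l * (A i k * A j l + A j k * A i l) else 0)
        + A i j * (∑ k, ∑ l, if k < l then A k l * A k l else 0) := by
  rw [EE_IBP γ hmeas hindep hgauss, pderiv_mul, pderiv_Spoly A hsymm hdiag, pderiv_mul, pderiv_Spoly A hsymm hdiag, pderiv_Rpoly A]
  have h : Rpoly A j * (Spoly A * Rpoly A i)
        + Spoly A * (Rpoly A j * Rpoly A i + Spoly A * C (A i j))
      = (Spoly A * (Rpoly A i * Rpoly A j) + Spoly A * (Rpoly A i * Rpoly A j))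
        + C (A i j) * (Spoly A * Spoly A) := by ring
  rw [h, EE_add γ hmeas hindep hgauss, EE_add γ hmeas hindep hgauss, EE_C_mul γ, gstep6 γ hmeas hindep hgauss A hsymm hdiag, gstepsig γ hmeas hindep hgauss A hsymm hdiag]
  ring

-- E[S⁴]
lemma gstep7 :
    EE γ (Spoly A * (Spoly A * (Spoly A * Spoly A)))
      = ∑ i, ∑ j, if i < j then
          A i j * (3 * (2 * (∑ k, ∑ l, if k < l then A k l * (A i k * A j l + A j k * A i l) else 0)
            + A i j * (∑ k, ∑ l, if k < l then A k l * A k l else 0))) else 0 := by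
  have h : Spoly A * (Spoly A * (Spoly A * Spoly A))
      = ∑ i, ∑ j, if i < j
          then (X i * X j * C (A i j)) * (Spoly A * (Spoly A * Spoly A)) else 0 := by
    rw [Spoly, Finset.sum_mul]
    refine Finset.sum_congr rfl fun i _ => ?_
    rw [Finset.sum_mul]
    exact Finset.sum_congr rfl fun j _ => by rw [ite_mul, zero_mul]
  rw [h, EE_sum γ hmeas hindep hgauss]
  refine Finset.sum_congr rfl fun i _ => ?_
  rw [EE_sum γ hmeas hindep hgauss]
  refine Finset.sum_congr rfl fun j _ => ?_
  by_cases hij : i < j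
  · rw [if_pos hij, if_pos hij]
    have h2 : (X i * X j * C (A i j)) * (Spoly A * (Spoly A * Spoly A))
        = C (A i j) * (X i * (X j * (Spoly A * (Spoly A * Spoly A)))) := by ring
    rw [h2, EE_C_mul γ, EE_IBP γ hmeas hindep hgauss, pderiv_mul, pderiv_X_of_ne (ne_of_gt hij), zero_mul, zero_add,
      pderiv_mul, pderiv_Spoly A hsymm hdiag, pderiv_mul, pderiv_Spoly A hsymm hdiag]
    have h3 : X j * (Rpoly A i * (Spoly A * Spoly A)
          + Spoly A * (Rpoly A i * Spoly A + Spoly A * Rpoly A i))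
        = (X j * (Spoly A * (Spoly A * Rpoly A i))
            + (X j * (Spoly A * (Spoly A * Rpoly A i))
              + X j * (Spoly A * (Spoly A * Rpoly A i)))) := by ring
    rw [h3, EE_add γ hmeas hindep hgauss, EE_add γ hmeas hindep hgauss, gstepH γ hmeas hindep hgauss A hsymm hdiag]
    ring
  · rw [if_neg hij, if_neg hij, EE_zero γ]

end Comp

/-! ### Final algebra -/

section Alg

variable {n : ℕ} (A : Fin n → Fin n → ℝ) (hsymm : ∀ i j, A i j = A j i) (hdiag : ∀ i, A i i = 0)

include hsymm hdiag

lemma gTfull (i j : Fin n) :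
    (∑ k, ∑ l, if k < l then A k l * (A i k * A j l + A j k * A i l) else 0)
      = ∑ k, ∑ l, A k l * A i k * A j l := by
  rw [gchaos_sum2 (fun k l => A k l * A i k * A j l)]
  have hd : (∑ k, A k k * A i k * A j k) = 0 := by
    refine Finset.sum_eq_zero fun k _ => by rw [hdiag]; ring
  rw [hd, add_zero]
  refine Finset.sum_congr rfl fun k _ => Finset.sum_congr rfl fun l _ => ?_
  split_ifs with h
  · rw [hsymm l k]; ring
  · rfl

lemma gTsym (i j : Fin n) :
    (∑ k, ∑ l, A k l * A j k * A i l) = ∑ k, ∑ l, A k l * A i k * A j l := by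
  rw [Finset.sum_comm]
  refine Finset.sum_congr rfl fun k _ => Finset.sum_congr rfl fun l _ => ?_
  rw [hsymm l k]; ring

lemma gfull2 : (∑ i, ∑ j, A i j * A i j)
    = 2 * (∑ i, ∑ j, if i < j then A i j * A i j else 0) := by
  rw [gchaos_sum2 (fun i j => A i j * A i j)]
  have hd : (∑ i, A i i * A i i) = 0 := by
    refine Finset.sum_eq_zero fun i _ => by rw [hdiag]; ring
  rw [hd, add_zero, Finset.mul_sum]
  refine Finset.sum_congr rfl fun i _ => ?_
  rw [Finset.mul_sum]
  refine Finset.sum_congr rfl fun j _ => ?_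
  split_ifs with h
  · rw [hsymm j i]; ring
  · ring

lemma galgebra :
    (∑ i, ∑ j, if i < j then
        A i j * (∑ k, ∑ l, if k < l then A k l * (A i k * A j l + A j k * A i l) else 0) else 0)
      ≤ 2 * (∑ i, ∑ j, if i < j then A i j * A i j else 0)
          * (∑ i, ∑ j, if i < j then A i j * A i j else 0) := by
  set s : ℝ := ∑ i, ∑ j, if i < j then A i j * A i j else 0 with hs
  -- twice the LHS equals the full symmetric sum
  have h2W : (∑ i, ∑ j, A i j * (∑ k, ∑ l, A k l * A i k * A j l))
      = 2 * (∑ i, ∑ j, if i < j then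
          A i j * (∑ k, ∑ l, if k < l then A k l * (A i k * A j l + A j k * A i l) else 0) else 0) := by
    rw [gchaos_sum2 (fun i j => A i j * (∑ k, ∑ l, A k l * A i k * A j l))]
    have hd : (∑ i, A i i * (∑ k, ∑ l, A k l * A i k * A i l)) = 0 := by
      refine Finset.sum_eq_zero fun i _ => by rw [hdiag]; ring
    rw [hd, add_zero, Finset.mul_sum]
    refine Finset.sum_congr rfl fun i _ => ?_
    rw [Finset.mul_sum]
    refine Finset.sum_congr rfl fun j _ => ?_
    split_ifs with h
    · rw [hsymm j i, gTsym A hsymm hdiag i j, gTfull A hsymm hdiag i j]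
      ring
    · ring
  -- rewrite full sum as sum of squares of B
  have hBsq : (∑ i, ∑ j, A i j * (∑ k, ∑ l, A k l * A i k * A j l))
      = ∑ i, ∑ l, (∑ j, A i j * A j l) * (∑ k, A i k * A k l) := by
    refine Finset.sum_congr rfl fun i _ => ?_
    calc (∑ j, A i j * (∑ k, ∑ l, A k l * A i k * A j l))
        = ∑ j, ∑ k, ∑ l, (A i j * A j l) * (A i k * A k l) := by
          refine Finset.sum_congr rfl fun j _ => ?_
          rw [Finset.mul_sum]
          refine Finset.sum_congr rfl fun k _ => ?_
          rw [Finset.mul_sum]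
          exact Finset.sum_congr rfl fun l _ => by ring
      _ = ∑ j, ∑ l, ∑ k, (A i j * A j l) * (A i k * A k l) := by
          exact Finset.sum_congr rfl fun j _ => Finset.sum_comm
      _ = ∑ l, ∑ j, ∑ k, (A i j * A j l) * (A i k * A k l) := Finset.sum_comm
      _ = ∑ l, (∑ j, A i j * A j l) * (∑ k, A i k * A k l) := by
          exact Finset.sum_congr rfl fun l _ => (Finset.sum_mul_sum _ _ _ _).symm
  -- Cauchy-Schwarz
  have hCS : (∑ i, ∑ l, (∑ j, A i j * A j l) * (∑ k, A i k * A k l))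
      ≤ (∑ i, ∑ j, A i j * A i j) * (∑ i, ∑ j, A i j * A i j) := by
    have step : ∀ i l : Fin n, (∑ j, A i j * A j l) * (∑ k, A i k * A k l)
        ≤ (∑ j, A i j * A i j) * (∑ j, A j l * A j l) := by
      intro i l
      have h := Finset.sum_mul_sq_le_sq_mul_sq Finset.univ (fun j => A i j) (fun j => A j l)
      calc (∑ j, A i j * A j l) * (∑ k, A i k * A k l)
          = (∑ j, A i j * A j l) ^ 2 := by rw [sq]
        _ ≤ (∑ j, A i j ^ 2) * (∑ j, A j l ^ 2) := h
        _ = (∑ j, A i j * A i j) * (∑ j, A j l * A j l) := by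
            simp only [sq]
    calc (∑ i, ∑ l, (∑ j, A i j * A j l) * (∑ k, A i k * A k l))
        ≤ ∑ i, ∑ l, (∑ j, A i j * A i j) * (∑ j, A j l * A j l) := by
          refine Finset.sum_le_sum fun i _ => Finset.sum_le_sum fun l _ => step i l
      _ = (∑ i, ∑ j, A i j * A i j) * (∑ l, ∑ j, A j l * A j l) :=
          (Finset.sum_mul_sum _ _ _ _).symm
      _ = (∑ i, ∑ j, A i j * A i j) * (∑ i, ∑ j, A i j * A i j) := by
          congr 1
          rw [Finset.sum_comm]
  have hfull := gfull2 A hsymm hdiag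
  rw [← hs] at hfull
  have h4s : (∑ i, ∑ j, A i j * A i j) * (∑ i, ∑ j, A i j * A i j) = 4 * (s * s) := by
    rw [hfull]; ring
  linarith [h2W, hBsq, hCS, h4s]
end Alg

/-! ### Main theorem -/

theorem stmt12 {Ω : Type*} [MeasureSpace Ω] [IsProbabilityMeasure (ℙ : Measure Ω)]
    {n : ℕ} (γ : Fin n → Ω → ℝ) (hmeas : ∀ i, Measurable (γ i))
    (hindep : iIndepFun γ ℙ)
    (hgauss : ∀ i, Measure.map (γ i) ℙ = gaussianReal 0 1)
    (A : Fin n → Fin n → ℝ) (hsymm : ∀ i j, A i j = A j i) (hdiag : ∀ i, A i i = 0) :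
    (∫ ω, (∑ i, ∑ j, if i < j then γ i ω * γ j ω * A i j else 0) ^ 4) ≤
      15 * (∫ ω, (∑ i, ∑ j, if i < j then γ i ω * γ j ω * A i j else 0) ^ 2) ^ 2 := by
  classical
  have hev : ∀ ω, (∑ i, ∑ j, if i < j then γ i ω * γ j ω * A i j else 0)
      = eval (fun i => γ i ω) (Spoly A) := by
    intro ω
    rw [Spoly, map_sum]
    refine Finset.sum_congr rfl fun i _ => ?_
    rw [map_sum]
    refine Finset.sum_congr rfl fun j _ => ?_
    rw [apply_ite (eval fun i => γ i ω), map_mul, map_mul, eval_X, eval_X, eval_C, map_zero]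
  have h2 : (∫ ω, (∑ i, ∑ j, if i < j then γ i ω * γ j ω * A i j else 0) ^ 2)
      = EE γ (Spoly A * Spoly A) := by
    unfold EE
    congr 1
    funext ω
    rw [hev ω, map_mul]
    ring
  have h4 : (∫ ω, (∑ i, ∑ j, if i < j then γ i ω * γ j ω * A i j else 0) ^ 4)
      = EE γ (Spoly A * (Spoly A * (Spoly A * Spoly A))) := by
    unfold EE
    congr 1
    funext ω
    rw [hev ω, map_mul, map_mul, map_mul]
    ring
  rw [h2, h4, gstepsig γ hmeas hindep hgauss A hsymm hdiag,
    gstep7 γ hmeas hindep hgauss A hsymm hdiag]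
  have hmassage : (∑ i, ∑ j, if i < j then
        A i j * (3 * (2 * (∑ k, ∑ l, if k < l then A k l * (A i k * A j l + A j k * A i l) else 0)
          + A i j * (∑ k, ∑ l, if k < l then A k l * A k l else 0))) else 0)
      = 6 * (∑ i, ∑ j, if i < j then
            A i j * (∑ k, ∑ l, if k < l then A k l * (A i k * A j l + A j k * A i l) else 0) else 0)
        + 3 * ((∑ i, ∑ j, if i < j then A i j * A i j else 0)
            * (∑ i, ∑ j, if i < j then A i j * A i j else 0)) := by
    calc (∑ i, ∑ j, if i < j then
        A i j * (3 * (2 * (∑ k, ∑ l, if k < l then A k l * (A i k * A j l + A j k * A i l) else 0)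
          + A i j * (∑ k, ∑ l, if k < l then A k l * A k l else 0))) else 0)
        = ∑ i, ∑ j, (6 * (if i < j then
              A i j * (∑ k, ∑ l, if k < l then A k l * (A i k * A j l + A j k * A i l) else 0) else 0)
            + 3 * ((if i < j then A i j * A i j else 0)
              * (∑ k, ∑ l, if k < l then A k l * A k l else 0))) := by
          refine Finset.sum_congr rfl fun i _ => Finset.sum_congr rfl fun j _ => ?_
          split_ifs with h
          · ring
          · ring
      _ = _ := by
          simp only [Finset.sum_add_distrib]
          congr 1
          · simp only [← Finset.mul_sum]
          · simp only [← Finset.mul_sum, ← Finset.sum_mul]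
  rw [hmassage, pow_two]
  have halg := galgebra A hsymm hdiag
  linarith [halg]
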